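/- Let F₂ be the free group on x and y. Define a₁ = x³, b₁ = y³, and recursively aₛ = x b_{s-1} x and bₛ = y a_{s-1} y for s ≥ 2. Then for every n ≥ 1, the elements a₁, b₁, ..., aₙ, bₙ form a free basis of a free subgroup of F₂ of rank 2n. -/

import Mathlib

/-!
Statement 6: in the free group `F₂` on `x, y`, with `a₁ = x³`, `b₁ = y³` and
`aₛ = x b_{s-1} x`, `bₛ = y a_{s-1} y` for `s ≥ 2`, for every `n ≥ 1` the elements
`a₁, b₁, …, aₙ, bₙ` form a free basis of a free subgroup of rank `2n`.
-/

namespace Stmt6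

abbrev F2 := FreeGroup (Fin 2)

def x : F2 := FreeGroup.of 0
def y : F2 := FreeGroup.of 1

/-- `ab s = (a_{s+1}, b_{s+1})` (0-based). -/
def ab : ℕ → F2 × F2
  | 0 => (x ^ 3, y ^ 3)
  | s + 1 => (x * (ab s).2 * x, y * (ab s).1 * y)

open List FreeGroup

abbrev Ltr := Fin 2 × Bool

def fl (p : Ltr) : Ltr := (p.1, !p.2)

lemma fl_injective : Function.Injective fl := by
  rintro ⟨a, b⟩ ⟨c, d⟩ h
  simp [fl, Prod.ext_iff] at h
  cases b <;> cases d <;> simp_all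

lemma invRev_eq (L : List Ltr) : invRev L = (L.map fl).reverse := rfl

lemma invRev_cons (a : Ltr) (w : List Ltr) : invRev (a :: w) = invRev w ++ [fl a] := by
  simp [invRev_eq]

lemma invRev_concat (a : Ltr) (w : List Ltr) : invRev (w ++ [a]) = fl a :: invRev w := by
  simp [invRev_eq]

/-- A word is reduced: no adjacent cancelling pair. -/
abbrev Reduced (L : List Ltr) : Prop :=
  List.Chain' (fun p q => ¬(p.1 = q.1 ∧ p.2 = !q.2)) L

theorem reduced_reduce (L : List Ltr) : Reduced (reduce L) := by
  induction L with
  | nil => exact List.isChain_nil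
  | cons a L ih =>
    rw [reduce.cons]
    cases h : reduce L with
    | nil => exact List.isChain_singleton _
    | cons b t =>
      rw [h] at ih
      show Reduced (if a.1 = b.1 ∧ a.2 = !b.2 then t else a :: b :: t)
      by_cases hc : a.1 = b.1 ∧ a.2 = !b.2
      · rw [if_pos hc]; exact ih.tail
      · rw [if_neg hc]; exact List.isChain_cons_cons.mpr ⟨hc, ih⟩

theorem Reduced.reduce_eq {L : List Ltr} (h : Reduced L) : reduce L = L := by
  induction L with
  | nil => rfl
  | cons a L ih =>
    have hL : Reduced L := h.tail
    rw [reduce.cons, ih hL]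
    cases L with
    | nil => rfl
    | cons b t =>
      have hc : ¬(a.1 = b.1 ∧ a.2 = !b.2) := (List.isChain_cons_cons.mp h).1
      show (if a.1 = b.1 ∧ a.2 = !b.2 then t else a :: b :: t) = _
      rw [if_neg hc]

theorem reduced_toWord (g : F2) : Reduced g.toWord := by
  have := reduced_reduce g.toWord
  rwa [reduce_toWord] at this

theorem Reduced.invRev {L : List Ltr} (h : Reduced L) : Reduced (FreeGroup.invRev L) := by
  have h2 : reduce (FreeGroup.invRev L) = FreeGroup.invRev L := by
    rw [reduce_invRev, h.reduce_eq]
  have := reduced_reduce (FreeGroup.invRev L)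
  rwa [h2] at this

/-- Cancellation lemma: the reduction of a concatenation of two reduced words cancels a
suffix of the first word against the inverse prefix of the second. -/
theorem cancel (u v : List Ltr) (hu : Reduced u) (hv : Reduced v) :
    ∃ k, k ≤ u.length ∧ k ≤ v.length ∧
      u.drop (u.length - k) = invRev (v.take k) ∧
      reduce (u ++ v) = u.take (u.length - k) ++ v.drop k := by
  rcases List.eq_nil_or_concat u with rfl | ⟨u', l, rfl⟩
  · exact ⟨0, by simp, by simp, by simp [invRev_eq], by simp [hv.reduce_eq]⟩
  · simp only [List.concat_eq_append] at hu ⊢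
    cases v with
    | nil =>
      refine ⟨0, by simp, by simp, by simp [invRev_eq], ?_⟩
      simp only [List.append_nil, Nat.sub_zero, List.take_length, List.drop_zero]
      exact hu.reduce_eq
    | cons m v' =>
      have hlen : (u' ++ [l]).length = u'.length + 1 := by simp
      have hu' : Reduced u' := (List.isChain_append.mp hu).1
      have hv' : Reduced v' := hv.tail
      by_cases hc : m = (l.1, !l.2)
      · obtain ⟨k, hk1, hk2, hk3, hk4⟩ := cancel u' v' hu' hv'
        have harith : (u' ++ [l]).length - (k + 1) = u'.length - k := by
          simp only [List.length_append, List.length_singleton]; omega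
        refine ⟨k + 1, by simp only [List.length_append, List.length_singleton]; omega,
          by simp only [List.length_cons]; omega, ?_, ?_⟩
        · rw [harith, List.drop_append_of_le_length (by omega),
            List.take_succ_cons, invRev_cons, hk3]
          have : fl m = l := by
            subst hc; simp [fl]
          rw [this]
        · have hstep : Red.Step (u' ++ [l] ++ m :: v') (u' ++ v') := by
            obtain ⟨l1, l2⟩ := l
            subst hc
            have : u' ++ [(l1, l2)] ++ (l1, !l2) :: v'
                = u' ++ ((l1, l2) :: (l1, !l2) :: v') := by simp
            rw [this]
            exact Red.Step.not
          rw [reduce.Step.eq hstep, hk4, harith,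
            List.take_append_of_le_length (by omega)]
          rfl
      · refine ⟨0, by simp, by simp, by simp [invRev_eq], ?_⟩
        have hred : Reduced (u' ++ [l] ++ m :: v') := by
          refine List.isChain_append.mpr ⟨hu, hv, ?_⟩
          intro p hp q hq
          rw [List.getLast?_concat] at hp
          simp only [List.head?_cons, Option.mem_some_iff] at hp hq
          subst hp; subst hq
          rintro ⟨h1, h2⟩
          exact hc (Prod.ext h1.symm (by rw [h2, Bool.not_not]))
        rw [Nat.sub_zero, List.take_length, List.drop_zero]
        exact hred.reduce_eq
termination_by u.length
decreasing_by simp_all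

/-- Master ping-pong step at the level of words. -/
theorem master {u v : List Ltr} {s : ℕ} (hu : Reduced u) (hv : Reduced v)
    (hlen : u.length = 2 * s + 3)
    (hQ : ¬ invRev (u.drop (s + 1)) <+: v) :
    u.take (s + 2) <+: reduce (u ++ v) := by
  obtain ⟨k, hku, hkv, hdrop, hred⟩ := cancel u v hu hv
  by_cases hk : s + 2 ≤ k
  · exfalso
    apply hQ
    have h1 : v.take k = invRev (u.drop (u.length - k)) := by
      rw [hdrop, invRev_invRev]
    have h2 : v.take (s + 2) = (v.take k).take (s + 2) := by
      rw [List.take_take]; congr 1; omega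
    have h3 : (invRev (u.drop (u.length - k))).take (s + 2) = invRev (u.drop (s + 1)) := by
      have hlen2 : (List.map fl (u.drop (u.length - k))).length = k := by
        simp only [List.length_map, List.length_drop]; omega
      rw [invRev_eq, List.take_reverse, hlen2, ← List.map_drop, List.drop_drop, invRev_eq]
      have harith : u.length - k + (k - (s + 2)) = s + 1 := by omega
      rw [harith]
    have : invRev (u.drop (s + 1)) = v.take (s + 2) := by rw [h2, h1, h3]
    rw [this]
    exact List.take_prefix _ _
  · rw [hred]
    have h1 : u.take (s + 2) = (u.take (u.length - k)).take (s + 2) := by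
      rw [List.take_take]; congr 1; omega
    have h2 : u.take (s + 2) <+: u.take (u.length - k) := by
      rw [h1]; exact List.take_prefix _ _
    exact h2.trans (List.prefix_append _ _)

theorem pingpong_step {u : List Ltr} {s : ℕ} (hu : Reduced u) (hlen : u.length = 2 * s + 3)
    (g : F2) (hQ : ¬ invRev (u.drop (s + 1)) <+: g.toWord) :
    u.take (s + 2) <+: ((mk u) * g).toWord := by
  have h : (mk u * g).toWord = reduce (u ++ g.toWord) := by
    conv_lhs => rw [← mk_toWord (x := g)]
    rw [mul_mk, toWord_mk]
  rw [h]
  exact master hu (reduced_toWord g) hlen hQ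

theorem invRev_take {u : List Ltr} {s : ℕ} (hlen : u.length = 2 * s + 3) :
    (invRev u).take (s + 2) = invRev (u.drop (s + 1)) := by
  rw [invRev_eq, List.take_reverse, ← List.map_drop, invRev_eq]
  have harith : (List.map fl u).length - (s + 2) = s + 1 := by
    rw [List.length_map, hlen]; omega
  rw [harith]

theorem invRev_drop {u : List Ltr} {s : ℕ} (hlen : u.length = 2 * s + 3) :
    invRev ((invRev u).drop (s + 1)) = u.take (s + 2) := by
  have h : (invRev u).drop (s + 1) = invRev (u.take (s + 2)) := by
    rw [invRev_eq, List.drop_reverse, ← List.map_take, invRev_eq]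
    have harith : (List.map fl u).length - (s + 1) = s + 2 := by
      rw [List.length_map, hlen]; omega
    rw [harith]
  rw [h, invRev_invRev]

theorem pingpong_step_inv {u : List Ltr} {s : ℕ} (hu : Reduced u) (hlen : u.length = 2 * s + 3)
    (g : F2) (hP : ¬ u.take (s + 2) <+: g.toWord) :
    invRev (u.drop (s + 1)) <+: ((mk u)⁻¹ * g).toWord := by
  rw [inv_mk, ← invRev_take hlen]
  exact pingpong_step hu.invRev (by rw [invRev_length, hlen]) g
    (by rw [invRev_drop hlen]; exact hP)

/-! ### The explicit words -/

def W : ℕ → List Ltr × List Ltr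
  | 0 => (List.replicate 3 ((0 : Fin 2), true), List.replicate 3 ((1 : Fin 2), true))
  | s + 1 => (((0 : Fin 2), true) :: (W s).2 ++ [((0 : Fin 2), true)],
      ((1 : Fin 2), true) :: (W s).1 ++ [((1 : Fin 2), true)])

def P : ℕ → List Ltr × List Ltr
  | 0 => ([((0 : Fin 2), true), ((0 : Fin 2), true)], [((1 : Fin 2), true), ((1 : Fin 2), true)])
  | s + 1 => (((0 : Fin 2), true) :: (P s).2, ((1 : Fin 2), true) :: (P s).1)

theorem mk_W (s : ℕ) : mk (W s).1 = (ab s).1 ∧ mk (W s).2 = (ab s).2 := by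
  induction s with
  | zero =>
    have hx : (x : F2) = mk [((0 : Fin 2), true)] := rfl
    have hy : (y : F2) = mk [((1 : Fin 2), true)] := rfl
    constructor
    · show _ = x ^ 3
      rw [pow_succ, pow_succ, pow_one, hx, mul_mk, mul_mk]
      rfl
    · show _ = y ^ 3
      rw [pow_succ, pow_succ, pow_one, hy, mul_mk, mul_mk]
      rfl
  | succ s ih =>
    have hx : (x : F2) = mk [((0 : Fin 2), true)] := rfl
    have hy : (y : F2) = mk [((1 : Fin 2), true)] := rfl
    constructor
    · show _ = x * (ab s).2 * x
      rw [← ih.2, hx, mul_mk, mul_mk]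
      rfl
    · show _ = y * (ab s).1 * y
      rw [← ih.1, hy, mul_mk, mul_mk]
      rfl

theorem len_W (s : ℕ) : (W s).1.length = 2 * s + 3 ∧ (W s).2.length = 2 * s + 3 := by
  induction s with
  | zero => simp [W]
  | succ s ih => simp [W, ih.1, ih.2]; omega

theorem W_spec (s : ℕ) : Reduced (W s).1 ∧ Reduced (W s).2 ∧
    (W s).1.getLast? = some ((0 : Fin 2), true) ∧ (W s).2.getLast? = some ((1 : Fin 2), true) ∧
    (W s).1.head? = some ((0 : Fin 2), true) ∧ (W s).2.head? = some ((1 : Fin 2), true) := by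
  induction s with
  | zero =>
    refine ⟨?_, ?_, by decide, by decide, by decide, by decide⟩ <;>
    · show List.IsChain _ (List.replicate 3 _)
      simp only [List.replicate_succ, List.replicate_zero]
      refine List.isChain_cons_cons.mpr ⟨by simp, List.isChain_cons_cons.mpr ⟨by simp, List.isChain_singleton _⟩⟩
  | succ s ih =>
    obtain ⟨h1, h2, h3, h4, h5, h6⟩ := ih
    have head2 : ((W s).2 ++ [((0 : Fin 2), true)]).head? = some ((1 : Fin 2), true) := by
      cases hW : (W s).2 with
      | nil => rw [hW] at h6; simp at h6
      | cons a t => rw [hW] at h6; simpa using h6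
    have head1 : ((W s).1 ++ [((1 : Fin 2), true)]).head? = some ((0 : Fin 2), true) := by
      cases hW : (W s).1 with
      | nil => rw [hW] at h5; simp at h5
      | cons a t => rw [hW] at h5; simpa using h5
    refine ⟨?_, ?_, ?_, ?_, rfl, rfl⟩
    · show List.IsChain _ (((0 : Fin 2), true) :: ((W s).2 ++ [((0 : Fin 2), true)]))
      rw [List.isChain_cons]
      refine ⟨?_, ?_⟩
      · intro p hp
        rw [head2] at hp
        simp only [Option.mem_some_iff] at hp
        subst hp; decide
      · rw [List.isChain_append]
        refine ⟨h2, List.isChain_singleton _, ?_⟩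
        intro p hp q hq
        rw [h4] at hp
        simp only [List.head?_cons, Option.mem_some_iff] at hp hq
        subst hp; subst hq; decide
    · show List.IsChain _ (((1 : Fin 2), true) :: ((W s).1 ++ [((1 : Fin 2), true)]))
      rw [List.isChain_cons]
      refine ⟨?_, ?_⟩
      · intro p hp
        rw [head1] at hp
        simp only [Option.mem_some_iff] at hp
        subst hp; decide
      · rw [List.isChain_append]
        refine ⟨h1, List.isChain_singleton _, ?_⟩
        intro p hp q hq
        rw [h3] at hp
        simp only [List.head?_cons, Option.mem_some_iff] at hp hq
        subst hp; subst hq; decide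
    · show ((((0 : Fin 2), true) :: (W s).2) ++ [((0 : Fin 2), true)]).getLast? = _
      rw [List.getLast?_concat]
    · show ((((1 : Fin 2), true) :: (W s).1) ++ [((1 : Fin 2), true)]).getLast? = _
      rw [List.getLast?_concat]

theorem take_W (s : ℕ) : (W s).1.take (s + 2) = (P s).1 ∧ (W s).2.take (s + 2) = (P s).2 := by
  induction s with
  | zero => exact ⟨by decide, by decide⟩
  | succ s ih =>
    constructor
    · show (((0 : Fin 2), true) :: ((W s).2 ++ [((0 : Fin 2), true)])).take (s + 2 + 1) = _
      rw [List.take_succ_cons, List.take_append_of_le_length (by rw [(len_W s).2]; omega), ih.2]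
      rfl
    · show (((1 : Fin 2), true) :: ((W s).1 ++ [((1 : Fin 2), true)])).take (s + 2 + 1) = _
      rw [List.take_succ_cons, List.take_append_of_le_length (by rw [(len_W s).1]; omega), ih.1]
      rfl

theorem drop_W (s : ℕ) : invRev ((W s).1.drop (s + 1)) = (P s).1.map fl ∧
    invRev ((W s).2.drop (s + 1)) = (P s).2.map fl := by
  induction s with
  | zero => exact ⟨by decide, by decide⟩
  | succ s ih =>
    constructor
    · show invRev ((((0 : Fin 2), true) :: ((W s).2 ++ [((0 : Fin 2), true)])).drop (s + 2)) = _
      rw [show s + 2 = s + 1 + 1 by rfl, List.drop_succ_cons,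
        List.drop_append_of_le_length (by rw [(len_W s).2]; omega), invRev_concat, ih.2]
      simp [P, fl]
    · show invRev ((((1 : Fin 2), true) :: ((W s).1 ++ [((1 : Fin 2), true)])).drop (s + 2)) = _
      rw [show s + 2 = s + 1 + 1 by rfl, List.drop_succ_cons,
        List.drop_append_of_le_length (by rw [(len_W s).1]; omega), invRev_concat, ih.1]
      simp [P, fl]

theorem P_shape (s : ℕ) : (∃ l, (P s).1 = ((0 : Fin 2), true) :: l) ∧
    (∃ l, (P s).2 = ((1 : Fin 2), true) :: l) := by
  cases s <;> exact ⟨⟨_, rfl⟩, ⟨_, rfl⟩⟩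

theorem P_prefix (s : ℕ) : ∀ t : ℕ,
    ((P s).1 <+: (P t).1 → s = t) ∧ ((P s).2 <+: (P t).2 → s = t) ∧
    ¬((P s).1 <+: (P t).2) ∧ ¬((P s).2 <+: (P t).1) := by
  induction s with
  | zero =>
    intro t
    cases t with
    | zero => exact ⟨fun _ => rfl, fun _ => rfl, by decide, by decide⟩
    | succ t =>
      obtain ⟨⟨l1, hl1⟩, ⟨l2, hl2⟩⟩ := P_shape t
      refine ⟨?_, ?_, ?_, ?_⟩
      · intro h
        exfalso
        rw [show (P (t+1)).1 = ((0 : Fin 2), true) :: (P t).2 from rfl, hl2] at h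
        have := (List.cons_prefix_cons.mp h).2
        have := (List.cons_prefix_cons.mp this).1
        simp at this
      · intro h
        exfalso
        rw [show (P (t+1)).2 = ((1 : Fin 2), true) :: (P t).1 from rfl, hl1] at h
        have := (List.cons_prefix_cons.mp h).2
        have := (List.cons_prefix_cons.mp this).1
        simp at this
      · intro h
        rw [show (P (t+1)).2 = ((1 : Fin 2), true) :: (P t).1 from rfl] at h
        have := (List.cons_prefix_cons.mp h).1
        simp at this
      · intro h
        rw [show (P (t+1)).1 = ((0 : Fin 2), true) :: (P t).2 from rfl] at h
        have := (List.cons_prefix_cons.mp h).1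
        simp at this
  | succ s ih =>
    intro t
    obtain ⟨⟨ls1, hls1⟩, ⟨ls2, hls2⟩⟩ := P_shape s
    cases t with
    | zero =>
      refine ⟨?_, ?_, ?_, ?_⟩
      · intro h
        exfalso
        rw [show (P (s+1)).1 = ((0 : Fin 2), true) :: (P s).2 from rfl, hls2] at h
        have := (List.cons_prefix_cons.mp h).2
        have := (List.cons_prefix_cons.mp this).1
        simp at this
      · intro h
        exfalso
        rw [show (P (s+1)).2 = ((1 : Fin 2), true) :: (P s).1 from rfl, hls1] at h
        have := (List.cons_prefix_cons.mp h).2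
        have := (List.cons_prefix_cons.mp this).1
        simp at this
      · intro h
        rw [show (P (s+1)).1 = ((0 : Fin 2), true) :: (P s).2 from rfl] at h
        have := (List.cons_prefix_cons.mp h).1
        simp at this
      · intro h
        rw [show (P (s+1)).2 = ((1 : Fin 2), true) :: (P s).1 from rfl] at h
        have := (List.cons_prefix_cons.mp h).1
        simp at this
    | succ t =>
      refine ⟨?_, ?_, ?_, ?_⟩
      · intro h
        have h2 := (List.cons_prefix_cons.mp h).2
        exact congrArg Nat.succ ((ih t).2.1 h2)
      · intro h
        have h2 := (List.cons_prefix_cons.mp h).2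
        exact congrArg Nat.succ ((ih t).1 h2)
      · intro h
        have := (List.cons_prefix_cons.mp h).1
        simp at this
      · intro h
        have := (List.cons_prefix_cons.mp h).1
        simp at this

theorem prefix_of_map_prefix {α β : Type*} {f : α → β} (hf : Function.Injective f) :
    ∀ (l₁ l₂ : List α), l₁.map f <+: l₂.map f → l₁ <+: l₂ := by
  intro l₁
  induction l₁ with
  | nil => intro _ _; exact List.nil_prefix
  | cons a l ih =>
    intro l₂ h
    cases l₂ with
    | nil =>
      simp at h
    | cons b t =>
      simp only [List.map_cons] at h
      obtain ⟨hab, h2⟩ := List.cons_prefix_cons.mp h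
      exact List.cons_prefix_cons.mpr ⟨hf hab, ih t h2⟩

theorem head_eq_of_prefix {a b : Ltr} {l₁ l₂ L : List Ltr}
    (h₁ : a :: l₁ <+: L) (h₂ : b :: l₂ <+: L) : a = b := by
  rcases List.prefix_or_prefix_of_prefix h₁ h₂ with h | h
  · exact (List.cons_prefix_cons.mp h).1
  · exact ((List.cons_prefix_cons.mp h).1).symm

theorem stmt_6 (n : ℕ) (hn : 1 ≤ n) :
    Function.Injective (FreeGroup.lift
      (Sum.elim (fun i : Fin n => (ab (i : ℕ)).1) (fun i : Fin n => (ab (i : ℕ)).2))) := by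
  have : NeZero n := ⟨by omega⟩
  have hnt : Nontrivial (Fin n ⊕ Fin n) := ⟨⟨Sum.inl 0, Sum.inr 0, by simp⟩⟩
  set a : Fin n ⊕ Fin n → F2 :=
    Sum.elim (fun i : Fin n => (ab (i : ℕ)).1) (fun i : Fin n => (ab (i : ℕ)).2) with ha
  -- index data
  let sv : Fin n ⊕ Fin n → ℕ := Sum.elim (fun i => (i : ℕ)) (fun i => (i : ℕ))
  let wd : Fin n ⊕ Fin n → List Ltr := Sum.elim (fun i => (W (i : ℕ)).1) (fun i => (W (i : ℕ)).2)
  let Pl : Fin n ⊕ Fin n → List Ltr := Sum.elim (fun i => (P (i : ℕ)).1) (fun i => (P (i : ℕ)).2)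
  have hmk : ∀ i, mk (wd i) = a i := by
    rintro (i | i)
    · exact (mk_W _).1
    · exact (mk_W _).2
  have hlen : ∀ i, (wd i).length = 2 * sv i + 3 := by
    rintro (i | i)
    · exact (len_W _).1
    · exact (len_W _).2
  have hredu : ∀ i, Reduced (wd i) := by
    rintro (i | i)
    · exact (W_spec _).1
    · exact (W_spec _).2.1
  have htake : ∀ i, (wd i).take (sv i + 2) = Pl i := by
    rintro (i | i)
    · exact (take_W _).1
    · exact (take_W _).2
  have hdrop : ∀ i, invRev ((wd i).drop (sv i + 1)) = (Pl i).map fl := by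
    rintro (i | i)
    · exact (drop_W _).1
    · exact (drop_W _).2
  have hshape : ∀ i, ∃ c l, Pl i = (c, true) :: l := by
    rintro (i | i)
    · obtain ⟨l, hl⟩ := (P_shape (i : ℕ)).1; exact ⟨_, l, hl⟩
    · obtain ⟨l, hl⟩ := (P_shape (i : ℕ)).2; exact ⟨_, l, hl⟩
  have hPinj : ∀ i j, Pl i <+: Pl j → i = j := by
    rintro (i | i) (j | j) h
    · exact congrArg Sum.inl (Fin.ext ((P_prefix _ _).1 h))
    · exact absurd h (P_prefix _ _).2.2.1
    · exact absurd h (P_prefix _ _).2.2.2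
    · exact congrArg Sum.inr (Fin.ext ((P_prefix _ _).2.1 h))
  -- ping-pong sets
  let X : Fin n ⊕ Fin n → Set F2 := fun i => {g | Pl i <+: g.toWord}
  let Y : Fin n ⊕ Fin n → Set F2 := fun i => {g | (Pl i).map fl <+: g.toWord}
  apply FreeGroup.injective_lift_of_ping_pong a X Y
  · -- nonempty
    intro i
    refine ⟨mk (wd i), ?_⟩
    show Pl i <+: (mk (wd i)).toWord
    rw [toWord_mk, (hredu i).reduce_eq, ← htake i]
    exact List.take_prefix _ _
  · -- X pairwise disjoint
    intro i j hij
    refine Set.disjoint_left.mpr ?_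
    intro g hgi hgj
    rcases List.prefix_or_prefix_of_prefix hgi hgj with h | h
    · exact hij (hPinj _ _ h)
    · exact hij (hPinj _ _ h).symm
  · -- Y pairwise disjoint
    intro i j hij
    refine Set.disjoint_left.mpr ?_
    intro g hgi hgj
    rcases List.prefix_or_prefix_of_prefix hgi hgj with h | h
    · exact hij (hPinj _ _ (prefix_of_map_prefix fl_injective _ _ h))
    · exact hij (hPinj _ _ (prefix_of_map_prefix fl_injective _ _ h)).symm
  · -- X and Y disjoint
    intro i j
    refine Set.disjoint_left.mpr ?_
    intro g hgi hgj
    obtain ⟨c, l, hcl⟩ := hshape i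
    obtain ⟨c', l', hcl'⟩ := hshape j
    have hgi0 : Pl i <+: g.toWord := hgi
    have hgj0 : (Pl j).map fl <+: g.toWord := hgj
    rw [hcl] at hgi0
    rw [hcl'] at hgj0
    simp only [List.map_cons] at hgj0
    have hgj1 : (c', false) :: (l'.map fl) <+: g.toWord := by
      simpa [fl] using hgj0
    have := head_eq_of_prefix hgi0 hgj1
    simp [Prod.ext_iff] at this
  · -- ping: a i • (Y i)ᶜ ⊆ X i
    intro i
    rintro _ ⟨g, hg, rfl⟩
    simp only [Set.mem_compl_iff] at hg
    have hg' : ¬ invRev ((wd i).drop (sv i + 1)) <+: g.toWord := by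
      rw [hdrop i]; exact hg
    show Pl i <+: (a i • g).toWord
    rw [smul_eq_mul, ← hmk i, ← htake i]
    exact pingpong_step (hredu i) (hlen i) g hg'
  · -- pong: (a i)⁻¹ • (X i)ᶜ ⊆ Y i
    intro i
    rintro _ ⟨g, hg, rfl⟩
    simp only [Set.mem_compl_iff] at hg
    have hg' : ¬ (wd i).take (sv i + 2) <+: g.toWord := by
      rw [htake i]; exact hg
    show (Pl i).map fl <+: ((a⁻¹) i • g).toWord
    rw [Pi.inv_apply, smul_eq_mul, ← hmk i, ← hdrop i]
    exact pingpong_step_inv (hredu i) (hlen i) g hg'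

end Stmt6
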